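/- Main theorem: for sub-σ-algebras 𝒢 ⊆ ℋ ⊆ 𝒜, the σ-algebra 𝒢 is sufficient for ℋ with respect to A₁ under P (P[A₁ | 𝒢] = P[A₁ | ℋ] P-a.s.) if and only if C*_A(P, ℋ) ⊆ C*_A(P, 𝒢). -/

import Mathlib

open MeasureTheory Set

/-- `Ψ` is an `m`-measurable version of the conditional probability of `A` given `m` under `P`
(a measure on the ambient σ-algebra `mΩ`): for every `m`-measurable `H`,
`P (A ∩ H) = ∫_H Ψ dP`. -/
def IsCondVersion {Ω : Type*} [mΩ : MeasurableSpace Ω] (m : MeasurableSpace Ω)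
    (P : @Measure Ω mΩ) (A : Set Ω) (Ψ : Ω → ℝ) : Prop :=
  Measurable[m] Ψ ∧
  ∀ H : Set Ω, MeasurableSet[m] H → (P (A ∩ H)).toReal = ∫ ω in H, Ψ ω ∂P

/-- `P` and `Q` are related by covariate shift w.r.t. the sub-σ-algebra `m`: there is a common
`m`-measurable `[0,1]`-valued version `Ψ` of the conditional probability of `A` given `m`. -/
def CovShift {Ω : Type*} [mΩ : MeasurableSpace Ω] (m : MeasurableSpace Ω)
    (P Q : @Measure Ω mΩ) (A : Set Ω) : Prop :=
  ∃ Ψ : Ω → ℝ, (∀ ω, Ψ ω ∈ Set.Icc (0 : ℝ) 1) ∧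
    @IsCondVersion Ω mΩ m P A Ψ ∧ @IsCondVersion Ω mΩ m Q A Ψ

/-- `Q` is absolutely continuous w.r.t. `P` on the sub-σ-algebra `m`. -/
def AbsContOn {Ω : Type*} [mΩ : MeasurableSpace Ω] (m : MeasurableSpace Ω)
    (P Q : @Measure Ω mΩ) : Prop :=
  ∀ N : Set Ω, MeasurableSet[m] N → P N = 0 → Q N = 0

/-- `C*_A(P, m)`: the probability measures `Q` absolutely continuous w.r.t. `P` on `m` that are
related to `P` by covariate shift w.r.t. `m`. -/
def CAstar {Ω : Type*} [mΩ : MeasurableSpace Ω] (m : MeasurableSpace Ω)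
    (P : @Measure Ω mΩ) (A : Set Ω) : Set (@Measure Ω mΩ) :=
  {Q | @IsProbabilityMeasure Ω mΩ Q ∧ @AbsContOn Ω mΩ m P Q ∧ @CovShift Ω mΩ m P Q A}

namespace StmtAux

variable {Ω : Type} [mΩ : MeasurableSpace Ω]

lemma aux_int {P : @Measure Ω mΩ} [IsFiniteMeasure P] {φ : Ω → ℝ}
    (hm : AEStronglyMeasurable φ P) (c : ℝ) (hb : ∀ ω, |φ ω| ≤ c) : Integrable φ P :=
  (integrable_const c).mono' hm (ae_of_all _ fun ω => by
    rw [Real.norm_eq_abs]; exact hb ω)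

lemma aux_meas_mono {m₁ m₂ : MeasurableSpace Ω} (h : m₁ ≤ m₂) {φ : Ω → ℝ}
    (hφ : Measurable[m₁] φ) : Measurable[m₂] φ := hφ.mono h le_rfl

lemma aux_inter {s t : Set Ω} (hs : MeasurableSet[mΩ] s) (ht : MeasurableSet[mΩ] t) :
    MeasurableSet[mΩ] (s ∩ t) := hs.inter ht

lemma aux_setIntegral_indicator {P : @Measure Ω mΩ} [IsFiniteMeasure P] {A s : Set Ω}
    (hA : MeasurableSet[mΩ] A) (hs : MeasurableSet[mΩ] s) :
    ∫ ω in s, A.indicator (fun _ => (1:ℝ)) ω ∂P = (P (A ∩ s)).toReal := by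
  rw [setIntegral_indicator hA, setIntegral_const, inter_comm]
  simp [measureReal_def]

lemma aux_indicator_int {P : @Measure Ω mΩ} [IsFiniteMeasure P] {A : Set Ω}
    (hA : MeasurableSet[mΩ] A) : Integrable (A.indicator (fun _ => (1:ℝ))) P :=
  aux_int (Measurable.aestronglyMeasurable
      (measurable_const.indicator (m := mΩ) hA)) 1 (fun ω => by
    by_cases h : ω ∈ A <;> simp [Set.indicator_apply, h])

lemma aux_intOn {P : @Measure Ω mΩ} {φ : Ω → ℝ} (h : Integrable φ P) (s : Set Ω) :
    IntegrableOn φ s P := h.integrableOn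

lemma aux_bdd_mul_int {P : @Measure Ω mΩ} [IsFiniteMeasure P] {g h : Ω → ℝ}
    (hg : Measurable[mΩ] g) (hh : Measurable[mΩ] h) (c d : ℝ)
    (hgb : ∀ ω, |g ω| ≤ c) (hhb : ∀ ω, |h ω| ≤ d) :
    Integrable (fun ω => g ω * h ω) P :=
  aux_int ((hg.mul hh).aestronglyMeasurable) (c * d) (fun ω => by
    rw [abs_mul]
    exact mul_le_mul (hgb ω) (hhb ω) (abs_nonneg _) ((abs_nonneg _).trans (hgb ω)))

lemma aux_ae_condexp {m : MeasurableSpace Ω} (hm : m ≤ mΩ)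
    {P : @Measure Ω mΩ} [IsProbabilityMeasure P] {A : Set Ω} (hA : MeasurableSet[mΩ] A)
    {Ψ : Ω → ℝ} (h01 : ∀ ω, Ψ ω ∈ Set.Icc (0:ℝ) 1)
    (hv : @IsCondVersion Ω mΩ m P A Ψ) :
    Ψ =ᵐ[P] P[A.indicator (fun _ => (1:ℝ)) | m] := by
  have hΨint : Integrable Ψ P :=
    aux_int (mΩ := mΩ) ((hv.1.mono hm le_rfl).aestronglyMeasurable) 1
      (fun ω => abs_le.mpr ⟨by linarith [(h01 ω).1], (h01 ω).2⟩)
  refine ae_eq_condExp_of_forall_setIntegral_eq hm (aux_indicator_int (mΩ := mΩ) hA)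
    (fun s _ _ => aux_intOn (mΩ := mΩ) hΨint s) (fun s hs _ => ?_)
    (StronglyMeasurable.aestronglyMeasurable (hv.1.stronglyMeasurable))
  rw [← hv.2 s hs, aux_setIntegral_indicator (mΩ := mΩ) hA (hm s hs)]

lemma aux_transfer_ae {m : MeasurableSpace Ω} {P Q : @Measure Ω mΩ}
    (hac : ∀ N : Set Ω, MeasurableSet[m] N → P N = 0 → Q N = 0)
    {Φ Ψ : Ω → ℝ} (hΦ : Measurable[m] Φ) (hΨ : Measurable[m] Ψ)
    (h : Φ =ᵐ[P] Ψ) : Φ =ᵐ[Q] Ψ := by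
  have hN : MeasurableSet[m] {ω | Φ ω = Ψ ω} :=
    measurableSet_eq_fun hΦ.stronglyMeasurable.measurable hΨ.stronglyMeasurable.measurable
  exact ae_iff.mpr (hac _ hN.compl (ae_iff.mp h))

/-- existence of a clamped `[0,1]`-valued `m`-measurable version of `P[1_A | m]`. -/
lemma aux_clamp_version {m : MeasurableSpace Ω} (hm : m ≤ mΩ)
    {P : @Measure Ω mΩ} [IsProbabilityMeasure P] {A : Set Ω} (hA : MeasurableSet[mΩ] A) :
    ∃ Ψ : Ω → ℝ, (∀ ω, Ψ ω ∈ Set.Icc (0:ℝ) 1) ∧ Measurable[m] Ψ ∧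
      Ψ =ᵐ[P] P[A.indicator (fun _ => (1:ℝ)) | m] ∧ @IsCondVersion Ω mΩ m P A Ψ := by
  set f := A.indicator (fun _ => (1:ℝ)) with hfdef
  have hfint : Integrable f P := aux_indicator_int (mΩ := mΩ) hA
  set c := P[f | m] with hcdef
  set Ψ : Ω → ℝ := fun ω => min 1 (max 0 (c ω)) with hΨdef
  have h01 : ∀ ω, Ψ ω ∈ Set.Icc (0:ℝ) 1 := fun ω =>
    ⟨le_min zero_le_one (le_max_left _ _), min_le_left _ _⟩
  have hmeas : Measurable[m] Ψ :=
    measurable_const.min (measurable_const.max stronglyMeasurable_condExp.measurable)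
  have hae : Ψ =ᵐ[P] c := by
    have h0 : 0 ≤ᵐ[P] c := condExp_nonneg (ae_of_all _ fun ω => by
      by_cases h : ω ∈ A <;> simp [hfdef, Set.indicator_apply, h])
    have h1 : c ≤ᵐ[P] fun _ => (1:ℝ) := by
      have := condExp_mono (m := m) hfint (integrable_const (1:ℝ))
        (ae_of_all _ fun ω => by
          by_cases h : ω ∈ A <;> simp [hfdef, Set.indicator_apply, h])
      rwa [condExp_const hm] at this
    filter_upwards [h0, h1] with ω hω0 hω1
    have h0' : (0:ℝ) ≤ c ω := hω0
    have h1' : c ω ≤ (1:ℝ) := hω1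
    simp only [hΨdef]
    rw [max_eq_right h0', min_eq_right h1']
  refine ⟨Ψ, h01, hmeas, hae, hmeas, fun s hs => ?_⟩
  rw [← aux_setIntegral_indicator (mΩ := mΩ) hA (hm s hs), ← hfdef,
    ← setIntegral_condExp hm hfint hs, ← hcdef]
  exact (integral_congr_ae (ae_restrict_of_ae hae)).symm

/-- pull-out property. -/
lemma aux_pullout {m : MeasurableSpace Ω} (hm : m ≤ mΩ) {P : @Measure Ω mΩ}
    [IsProbabilityMeasure P] {f g : Ω → ℝ} (hfint : Integrable f P)
    (hgm : Measurable[m] g) (c : ℝ) (hgb : ∀ ω, |g ω| ≤ c)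
    {s : Set Ω} (hs : MeasurableSet[m] s) :
    ∫ ω in s, g ω * f ω ∂P = ∫ ω in s, g ω * (P[f | m]) ω ∂P := by
  have hgf : Integrable (g * f) P :=
    hfint.bdd_mul ((hgm.mono hm le_rfl).aestronglyMeasurable)
      (ae_of_all _ fun ω => by rw [Real.norm_eq_abs]; exact hgb ω)
  have hmul : P[g * f | m] =ᵐ[P] g * P[f | m] :=
    condExp_stronglyMeasurable_mul_of_bound hm hgm.stronglyMeasurable hfint c
      (ae_of_all _ fun ω => by rw [Real.norm_eq_abs]; exact hgb ω)
  calc ∫ ω in s, g ω * f ω ∂P = ∫ ω in s, (g * f) ω ∂P := rfl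
    _ = ∫ ω in s, (P[g * f | m]) ω ∂P := (setIntegral_condExp hm hgf hs).symm
    _ = ∫ ω in s, (g * P[f | m]) ω ∂P := integral_congr_ae (ae_restrict_of_ae hmul)
    _ = ∫ ω in s, g ω * (P[f | m]) ω ∂P := rfl

lemma aux_withDensity_setIntegral {P : @Measure Ω mΩ} {g : Ω → ℝ} (hg : Measurable[mΩ] g)
    (hg0 : ∀ ω, 0 ≤ g ω) {s : Set Ω} (hs : MeasurableSet[mΩ] s) (h : Ω → ℝ) :
    ∫ ω in s, h ω ∂(P.withDensity (fun ω => ENNReal.ofReal (g ω))) =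
      ∫ ω in s, g ω * h ω ∂P := by
  have h1 : (fun ω => ENNReal.ofReal (g ω)) = fun ω => ((g ω).toNNReal : ENNReal) := rfl
  rw [h1, setIntegral_withDensity_eq_setIntegral_smul hg.real_toNNReal h hs]
  refine integral_congr_ae (ae_of_all _ fun ω => ?_)
  show (g ω).toNNReal • h ω = g ω * h ω
  rw [NNReal.smul_def, smul_eq_mul, Real.coe_toNNReal _ (hg0 ω)]

lemma aux_withDensity_apply {P : @Measure Ω mΩ} [IsFiniteMeasure P] {g : Ω → ℝ}
    (hg : Measurable[mΩ] g) (hg0 : ∀ ω, 0 ≤ g ω) (hgint : Integrable g P)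
    {s : Set Ω} (hs : MeasurableSet[mΩ] s) :
    ((P.withDensity (fun ω => ENNReal.ofReal (g ω))) s).toReal = ∫ ω in s, g ω ∂P := by
  rw [withDensity_apply _ hs,
    ← ofReal_integral_eq_lintegral_ofReal (aux_intOn (mΩ := mΩ) hgint s)
      (ae_of_all _ fun ω => hg0 ω),
    ENNReal.toReal_ofReal (integral_nonneg (fun ω => hg0 ω))]

lemma aux_setIntegral_univ {P : @Measure Ω mΩ} (φ : Ω → ℝ) :
    ∫ ω in Set.univ, φ ω ∂P = ∫ ω, φ ω ∂P := setIntegral_univ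

lemma aux_ind_mul {P : @Measure Ω mΩ} {A : Set Ω} (s : Set Ω) (hA : MeasurableSet[mΩ] A)
    (g : Ω → ℝ) :
    ∫ ω in A ∩ s, g ω ∂P = ∫ ω in s, g ω * (A.indicator fun _ => (1:ℝ)) ω ∂P := by
  have h : (fun ω => g ω * (A.indicator fun _ => (1:ℝ)) ω) = A.indicator g := by
    funext ω; by_cases h : ω ∈ A <;> simp [Set.indicator_apply, h]
  rw [h, setIntegral_indicator hA, inter_comm]

lemma aux_meas_oneadd {m : MeasurableSpace Ω} {Ψ Θ : Ω → ℝ} (hΨ : Measurable[m] Ψ)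
    (hΘ : Measurable[m] Θ) : Measurable[m] (fun ω => 1 + (Ψ ω - Θ ω)) :=
  measurable_const.add (hΨ.sub hΘ)

lemma aux_meas_sub {m : MeasurableSpace Ω} {Ψ Θ : Ω → ℝ} (hΨ : Measurable[m] Ψ)
    (hΘ : Measurable[m] Θ) : Measurable[m] (fun ω => Ψ ω - Θ ω) := hΨ.sub hΘ

end StmtAux

open StmtAux in
theorem stmt11 {Ω : Type} [mΩ : MeasurableSpace Ω]
    {G H : MeasurableSpace Ω} (hGH : G ≤ H) (hH : H ≤ mΩ)
    (A₁ : Set Ω) (hA₁ : MeasurableSet[mΩ] A₁)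
    (P : @Measure Ω mΩ) (hP : @IsProbabilityMeasure Ω mΩ P)
    (hpos : 0 < P A₁) (hlt : P A₁ < 1) :
    (∃ Ψ : Ω → ℝ, (∀ ω, Ψ ω ∈ Set.Icc (0 : ℝ) 1) ∧
        @IsCondVersion Ω mΩ G P A₁ Ψ ∧ @IsCondVersion Ω mΩ H P A₁ Ψ) ↔
      @CAstar Ω mΩ H P A₁ ⊆ @CAstar Ω mΩ G P A₁ := by
  constructor
  · rintro ⟨Ψ₀, h01, hGv, hHv⟩ Q hQ
    obtain ⟨hQprob, hQac, Φ, hΦ01, hΦP, hΦQ⟩ := hQ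
    have hPae : Φ =ᵐ[P] Ψ₀ :=
      (aux_ae_condexp (mΩ := mΩ) hH hA₁ hΦ01 hΦP).trans
        (aux_ae_condexp (mΩ := mΩ) hH hA₁ h01 hHv).symm
    have hQae : Φ =ᵐ[Q] Ψ₀ := aux_transfer_ae (mΩ := mΩ) hQac hΦP.1 hHv.1 hPae
    refine ⟨hQprob, fun N hN hPN => hQac N (hGH N hN) hPN, Ψ₀, h01, hGv, hGv.1,
      fun s hs => ?_⟩
    rw [hΦQ.2 s (hGH s hs)]
    exact integral_congr_ae (ae_restrict_of_ae hQae)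
  · intro hsub
    obtain ⟨Ψ, hΨ01, hΨm, hΨae, hΨv⟩ := aux_clamp_version (mΩ := mΩ) (P := P) hH hA₁
    obtain ⟨Θ, hΘ01, hΘm, hΘae, hΘv⟩ := aux_clamp_version (mΩ := mΩ) (P := P) (hGH.trans hH) hA₁
    have hΘmH : Measurable[H] Θ := aux_meas_mono (mΩ := mΩ) hGH hΘm
    set g : Ω → ℝ := fun ω => 1 + (Ψ ω - Θ ω) with hgdef
    have hg0 : ∀ ω, 0 ≤ g ω := fun ω => by
      have h1 := (hΨ01 ω).1; have h2 := (hΘ01 ω).2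
      simp only [hgdef]; linarith
    have hg2 : ∀ ω, |g ω| ≤ 2 := fun ω => by
      have h1 := (hΨ01 ω).1; have h2 := (hΨ01 ω).2
      have h3 := (hΘ01 ω).1; have h4 := (hΘ01 ω).2
      simp only [hgdef]; rw [abs_le]; constructor <;> linarith
    have hgHm : Measurable[H] g := aux_meas_oneadd (mΩ := mΩ) hΨm hΘmH
    have hgm : Measurable[mΩ] g := aux_meas_mono (mΩ := mΩ) hH hgHm
    have hΨmΩ : Measurable[mΩ] Ψ := aux_meas_mono (mΩ := mΩ) hH hΨm
    have hΘmΩ : Measurable[mΩ] Θ := aux_meas_mono (mΩ := mΩ) (hGH.trans hH) hΘm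
    have hΨint : Integrable Ψ P := aux_int (mΩ := mΩ) hΨmΩ.aestronglyMeasurable 1
      (fun ω => abs_le.mpr ⟨by linarith [(hΨ01 ω).1], (hΨ01 ω).2⟩)
    have hΘint : Integrable Θ P := aux_int (mΩ := mΩ) hΘmΩ.aestronglyMeasurable 1
      (fun ω => abs_le.mpr ⟨by linarith [(hΘ01 ω).1], (hΘ01 ω).2⟩)
    have hgint : Integrable g P := aux_int (mΩ := mΩ) hgm.aestronglyMeasurable 2 hg2
    have hfint : Integrable (A₁.indicator fun _ => (1:ℝ)) P :=
      aux_indicator_int (mΩ := mΩ) hA₁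
    have hΨtot : ∫ ω, Ψ ω ∂P = (P A₁).toReal := by
      have h := hΨv.2 Set.univ (@MeasurableSet.univ Ω H)
      rw [Set.inter_univ, aux_setIntegral_univ (mΩ := mΩ) Ψ] at h
      exact h.symm
    have hΘtot : ∫ ω, Θ ω ∂P = (P A₁).toReal := by
      have h := hΘv.2 Set.univ (@MeasurableSet.univ Ω G)
      rw [Set.inter_univ, aux_setIntegral_univ (mΩ := mΩ) Θ] at h
      exact h.symm
    have hgtot : ∫ ω, g ω ∂P = 1 := by
      simp only [hgdef]
      calc ∫ ω, (1 + (Ψ ω - Θ ω)) ∂P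
          = ∫ _ω, (1:ℝ) ∂P + ∫ ω, (Ψ ω - Θ ω) ∂P :=
            integral_add (integrable_const 1) (hΨint.sub hΘint)
        _ = 1 := by
            have h1 : ∫ ω, (Ψ ω - Θ ω) ∂P = ∫ ω, Ψ ω ∂P - ∫ ω, Θ ω ∂P :=
              integral_sub hΨint hΘint
            rw [h1, hΨtot, hΘtot, integral_const]
            simp
    set Q := P.withDensity (fun ω => ENNReal.ofReal (g ω)) with hQdef
    have hQap : ∀ s, MeasurableSet[mΩ] s → (Q s).toReal = ∫ ω in s, g ω ∂P :=
      fun s hs => aux_withDensity_apply (mΩ := mΩ) hgm hg0 hgint hs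
    have hQint : ∀ (h : Ω → ℝ) (s : Set Ω), MeasurableSet[mΩ] s →
        ∫ ω in s, h ω ∂Q = ∫ ω in s, g ω * h ω ∂P :=
      fun h s hs => aux_withDensity_setIntegral (mΩ := mΩ) hgm hg0 hs h
    have hQac : Q ≪ P := withDensity_absolutelyContinuous P _
    have hQprob : IsProbabilityMeasure Q := by
      constructor
      rw [hQdef, withDensity_apply _ (@MeasurableSet.univ Ω mΩ), Measure.restrict_univ,
        ← ofReal_integral_eq_lintegral_ofReal hgint (ae_of_all _ hg0), hgtot,
        ENNReal.ofReal_one]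
    have hpull : ∀ s, MeasurableSet[H] s →
        ∫ ω in s, g ω * (A₁.indicator fun _ => (1:ℝ)) ω ∂P = ∫ ω in s, g ω * Ψ ω ∂P := by
      intro s hs
      rw [aux_pullout (mΩ := mΩ) hH hfint hgHm 2 hg2 hs]
      refine integral_congr_ae (ae_restrict_of_ae ?_)
      filter_upwards [hΨae] with ω h
      rw [h]
    have hQH : Q ∈ @CAstar Ω mΩ H P A₁ := by
      refine ⟨hQprob, fun N hN hPN => hQac hPN, Ψ, hΨ01, hΨv, hΨm, fun s hs => ?_⟩
      rw [hQap _ (aux_inter (mΩ := mΩ) hA₁ (hH s hs)), hQint Ψ s (hH s hs), ← hpull s hs]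
      exact aux_ind_mul (mΩ := mΩ) s hA₁ g
    obtain ⟨-, -, Φ, hΦ01, hΦP, hΦQ⟩ := hsub hQH
    have hΦae : Φ =ᵐ[P] Θ :=
      (aux_ae_condexp (mΩ := mΩ) (hGH.trans hH) hA₁ hΦ01 hΦP).trans hΘae.symm
    have hΦaeQ : Φ =ᵐ[Q] Θ := hΦae.filter_mono hQac.ae_le
    have e1 : (Q A₁).toReal = ∫ ω, Φ ω ∂Q := by
      have h := hΦQ.2 Set.univ (@MeasurableSet.univ Ω G)
      rwa [Set.inter_univ, aux_setIntegral_univ (mΩ := mΩ) Φ] at h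
    have e2 : (Q A₁).toReal = ∫ ω, g ω * Ψ ω ∂P := by
      rw [hQap A₁ hA₁]
      have h := aux_ind_mul (mΩ := mΩ) (P := P) Set.univ hA₁ g
      rw [Set.inter_univ] at h
      rw [h, hpull Set.univ (@MeasurableSet.univ Ω H),
        aux_setIntegral_univ (mΩ := mΩ) (fun ω => g ω * Ψ ω)]
    have e3 : ∫ ω, Φ ω ∂Q = ∫ ω, g ω * Θ ω ∂P := by
      rw [integral_congr_ae hΦaeQ]
      have h := hQint Θ Set.univ (@MeasurableSet.univ Ω mΩ)
      rwa [aux_setIntegral_univ (mΩ := mΩ) Θ,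
        aux_setIntegral_univ (mΩ := mΩ) (fun ω => g ω * Θ ω)] at h
    have key : ∫ ω, g ω * Ψ ω ∂P = ∫ ω, g ω * Θ ω ∂P := by rw [← e2, e1, e3]
    have hDb : ∀ ω, |Ψ ω - Θ ω| ≤ 1 := fun ω => by
      have h1 := (hΨ01 ω).1; have h2 := (hΨ01 ω).2
      have h3 := (hΘ01 ω).1; have h4 := (hΘ01 ω).2
      rw [abs_le]; constructor <;> linarith
    have hDm : Measurable[mΩ] (fun ω => Ψ ω - Θ ω) := aux_meas_sub (mΩ := mΩ) hΨmΩ hΘmΩ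
    have hgΨint : Integrable (fun ω => g ω * Ψ ω) P :=
      aux_bdd_mul_int (mΩ := mΩ) hgm hΨmΩ 2 1 hg2
        (fun ω => abs_le.mpr ⟨by linarith [(hΨ01 ω).1], (hΨ01 ω).2⟩)
    have hgΘint : Integrable (fun ω => g ω * Θ ω) P :=
      aux_bdd_mul_int (mΩ := mΩ) hgm hΘmΩ 2 1 hg2
        (fun ω => abs_le.mpr ⟨by linarith [(hΘ01 ω).1], (hΘ01 ω).2⟩)
    have hDint : Integrable (fun ω => Ψ ω - Θ ω) P := hΨint.sub hΘint
    have hDtot : ∫ ω, (Ψ ω - Θ ω) ∂P = 0 := by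
      have h1 : ∫ ω, (Ψ ω - Θ ω) ∂P = ∫ ω, Ψ ω ∂P - ∫ ω, Θ ω ∂P :=
        integral_sub hΨint hΘint
      rw [h1, hΨtot, hΘtot]; ring
    have hsqint : Integrable (fun ω => (Ψ ω - Θ ω)^2) P := by
      have h : (fun ω => (Ψ ω - Θ ω)^2) = fun ω => (Ψ ω - Θ ω) * (Ψ ω - Θ ω) := by
        funext ω; ring
      rw [h]
      exact aux_bdd_mul_int (mΩ := mΩ) hDm hDm 1 1 hDb hDb
    have hsq0 : ∫ ω, (Ψ ω - Θ ω)^2 ∂P = 0 := by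
      have hpt : ∀ ω, (Ψ ω - Θ ω)^2 = g ω * Ψ ω - g ω * Θ ω - (Ψ ω - Θ ω) := by
        intro ω; simp only [hgdef]; ring
      calc ∫ ω, (Ψ ω - Θ ω)^2 ∂P
          = ∫ ω, (g ω * Ψ ω - g ω * Θ ω - (Ψ ω - Θ ω)) ∂P :=
            integral_congr_ae (ae_of_all _ hpt)
        _ = 0 := by
            have h1 : ∫ ω, (g ω * Ψ ω - g ω * Θ ω - (Ψ ω - Θ ω)) ∂P
                = ∫ ω, (g ω * Ψ ω - g ω * Θ ω) ∂P - ∫ ω, (Ψ ω - Θ ω) ∂P :=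
              integral_sub (hgΨint.sub hgΘint) hDint
            have h2 : ∫ ω, (g ω * Ψ ω - g ω * Θ ω) ∂P
                = ∫ ω, g ω * Ψ ω ∂P - ∫ ω, g ω * Θ ω ∂P :=
              integral_sub hgΨint hgΘint
            rw [h1, h2, key, hDtot]
            ring
    have hD0 : ∀ᵐ ω ∂P, Ψ ω - Θ ω = 0 := by
      have h := (integral_eq_zero_iff_of_nonneg_ae
        (ae_of_all _ fun ω => sq_nonneg (Ψ ω - Θ ω)) hsqint).mp hsq0
      filter_upwards [h] with ω hω
      have hω' : (Ψ ω - Θ ω)^2 = 0 := hω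
      exact pow_eq_zero_iff (two_ne_zero) |>.mp hω'
    have hΨΘ : Ψ =ᵐ[P] Θ := by
      filter_upwards [hD0] with ω hω; linarith
    refine ⟨Θ, hΘ01, hΘv, hΘmH, fun s hs => ?_⟩
    rw [hΨv.2 s hs]
    exact integral_congr_ae (ae_restrict_of_ae hΨΘ)
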